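/- arXiv:0804.2948 — 2 statements merged into one kernel-verified Lean document; each statement's English description precedes it below -/
import Mathlib

section
/- For any integer g ≥ 1, the sum of (-1)^{1 - 2g/n} φ(n) over divisors n of 2g with n > 1 equals 1. -/
theorem sum_signed_totient_divisors_even (g : ℕ) (hg : 1 ≤ g) :
    ∑ n ∈ (2 * g).divisors.filter (fun n => 1 < n),
      (-1 : ℚ) ^ ((1 : ℤ) - (2 * g / n : ℕ)) * (Nat.totient n : ℚ) = 1 := by
  have hg0 : g ≠ 0 := by omega
  have h2g0 : 2 * g ≠ 0 := by omega
  have hsign : ∀ k : ℕ, (-1 : ℚ) ^ ((1 : ℤ) - (k : ℕ)) = -(-1 : ℚ) ^ k := by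
    intro k
    rcases Nat.even_or_odd k with h | h
    · have h1 : Odd ((1:ℤ) - (k:ℤ)) := by
        rcases h with ⟨m, hm⟩
        exact ⟨-m, by push_cast [hm]; ring⟩
      simp [h1.neg_one_zpow, h.neg_one_pow]
    · have h1 : Even ((1:ℤ) - (k:ℤ)) := by
        rcases h with ⟨m, hm⟩
        exact ⟨-m, by push_cast [hm]; ring⟩
      simp [h1.neg_one_zpow, h.neg_one_pow]
  have hfilter : (2*g).divisors.filter (fun n => 1 < n) = (2*g).divisors.erase 1 := by
    ext n
    simp only [Finset.mem_filter, Finset.mem_erase, Nat.mem_divisors]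
    constructor
    · rintro ⟨h1, h2⟩; exact ⟨by omega, h1⟩
    · rintro ⟨h1, h2⟩
      have hn0 : n ≠ 0 := by
        rintro rfl
        exact h2.2 (zero_dvd_iff.mp h2.1)
      exact ⟨h2, by omega⟩
  have hfp : (2*g).divisors.filter (fun n => n ∣ g) = g.divisors := by
    ext n
    simp only [Finset.mem_filter, Nat.mem_divisors]
    constructor
    · rintro ⟨_, hng⟩; exact ⟨hng, hg0⟩
    · rintro ⟨hng, _⟩; exact ⟨⟨hng.mul_left 2, h2g0⟩, hng⟩
  have hsumtot : ∀ m : ℕ, ∑ n ∈ m.divisors, (Nat.totient n : ℚ) = m := by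
    intro m
    exact_mod_cast congrArg (Nat.cast : ℕ → ℚ) (Nat.sum_totient m)
  have e1 : ∑ n ∈ (2*g).divisors.filter (fun n => n ∣ g),
      (-1 : ℚ) ^ ((1 : ℤ) - (2 * g / n : ℕ)) * (Nat.totient n : ℚ) = -(g : ℚ) := by
    have hterm : ∀ n ∈ (2*g).divisors.filter (fun n => n ∣ g),
        (-1 : ℚ) ^ ((1 : ℤ) - (2 * g / n : ℕ)) * (Nat.totient n : ℚ)
          = -(Nat.totient n : ℚ) := by
      intro n hn
      simp only [Finset.mem_filter, Nat.mem_divisors] at hn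
      rw [hsign, Nat.mul_div_assoc 2 hn.2, (even_two_mul _).neg_one_pow]
      ring
    rw [Finset.sum_congr rfl hterm, Finset.sum_neg_distrib, hfp, hsumtot]
  have e2 : ∑ n ∈ (2*g).divisors.filter (fun n => ¬ n ∣ g),
      (-1 : ℚ) ^ ((1 : ℤ) - (2 * g / n : ℕ)) * (Nat.totient n : ℚ) = (g : ℚ) := by
    have hterm : ∀ n ∈ (2*g).divisors.filter (fun n => ¬ n ∣ g),
        (-1 : ℚ) ^ ((1 : ℤ) - (2 * g / n : ℕ)) * (Nat.totient n : ℚ)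
          = (Nat.totient n : ℚ) := by
      intro n hn
      simp only [Finset.mem_filter, Nat.mem_divisors] at hn
      obtain ⟨⟨hdvd, _⟩, hndvd⟩ := hn
      have hodd : Odd (2 * g / n) := by
        rcases Nat.even_or_odd (2 * g / n) with ⟨k, hk⟩ | h
        · exfalso
          have hmul : 2 * g / n * n = 2 * g := Nat.div_mul_cancel hdvd
          rw [hk] at hmul
          have hkn : k * n = g := by
            have : 2 * (k * n) = 2 * g := by linarith [hmul]; 
            omega
          exact hndvd ⟨k, by rw [← hkn]; ring⟩
        · exact h
      rw [hsign, hodd.neg_one_pow]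
      ring
    have hsplit := Finset.sum_filter_add_sum_filter_not (2*g).divisors
      (fun n => n ∣ g) (fun n => (Nat.totient n : ℚ))
    rw [Finset.sum_congr rfl hterm]
    rw [hfp, hsumtot] at hsplit
    have h2 : ∑ n ∈ (2*g).divisors, (Nat.totient n : ℚ) = ((2*g : ℕ) : ℚ) := hsumtot _
    push_cast at h2 hsplit ⊢
    linarith
  have key : ∑ n ∈ (2*g).divisors,
      (-1 : ℚ) ^ ((1 : ℤ) - (2 * g / n : ℕ)) * (Nat.totient n : ℚ) = 0 := by
    rw [← Finset.sum_filter_add_sum_filter_not (2*g).divisors (fun n => n ∣ g), e1, e2]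
    ring
  rw [hfilter, Finset.sum_erase_eq_sub (Nat.one_mem_divisors.mpr h2g0), key]
  rw [Nat.div_one, Nat.totient_one, hsign, (even_two_mul g).neg_one_pow]
  norm_num
end

section
/- For any integer g ≥ 2 and any n ≥ 0, the sum over all pairs (j, r) of nonnegative integers with j + 2r ≤ n and j ≤ 2g+2 of (-1)^{n-j-r} · 2^{n-j-2r} · (2g-1+n-j-r)! / (j! · r! · (2g+2-j)! · (n-j-2r)!) equals (-1)^n · (2g+n-3)! / (2g·(2g+1)·(2g+2)·n!·(2g-3)!). -/
open Finset

lemma key_rec (h : ℕ → ℚ) (m : ℕ) :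
    ∑ r ∈ range (m+3), (-1:ℚ)^r * 2^(m+2-2*r) * ((m+2-r).choose r : ℚ) * h (m+1-r)
      = 2 * ∑ r ∈ range (m+2), (-1:ℚ)^r * 2^(m+1-2*r) * ((m+1-r).choose r : ℚ) * h (m+1-r)
        - ∑ r ∈ range (m+1), (-1:ℚ)^r * 2^(m-2*r) * ((m-r).choose r : ℚ) * h (m-r) := by
  rw [Finset.sum_range_succ (n := m+2)]
  have hz : ((m+2-(m+2)).choose (m+2) : ℚ) = 0 := by
    rw [show m+2-(m+2) = 0 from by omega]
    simp [Nat.choose_eq_zero_of_lt]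
  rw [hz]
  rw [Finset.sum_range_succ' _ (m+1)]
  rw [Finset.sum_range_succ' (fun r => (-1:ℚ)^r * 2^(m+1-2*r) * ((m+1-r).choose r : ℚ) * h (m+1-r)) (m+1)]
  have key : ∀ i ∈ range (m+1),
      (-1:ℚ)^(i+1) * 2^(m+2-2*(i+1)) * ((m+2-(i+1)).choose (i+1) : ℚ) * h (m+1-(i+1))
      = 2 * ((-1:ℚ)^(i+1) * 2^(m+1-2*(i+1)) * ((m+1-(i+1)).choose (i+1) : ℚ) * h (m+1-(i+1)))
        - (-1:ℚ)^i * 2^(m-2*i) * ((m-i).choose i : ℚ) * h (m-i) := by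
    intro i hi
    rw [Finset.mem_range] at hi
    have hi' : i ≤ m := by omega
    rw [show m+2-2*(i+1) = m-2*i from by omega, show m+2-(i+1) = (m-i)+1 from by omega,
        show m+1-(i+1) = m-i from by omega, show m+1-2*(i+1) = m-(2*i+1) from by omega]
    rw [Nat.choose_succ_succ]
    push_cast
    rcases le_or_gt (2*i+1) m with hc | hc
    · rw [show m-2*i = (m-(2*i+1))+1 from by omega]
      ring
    · have c1 : ((m-i).choose (i+1) : ℚ) = 0 := by
        rw [Nat.choose_eq_zero_of_lt (by omega)]; norm_num
      rw [c1]; ring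
  rw [Finset.sum_congr rfl key, Finset.sum_sub_distrib]
  rw [← Finset.mul_sum]
  simp only [Nat.choose_zero_right, Nat.cast_one, mul_one, mul_zero, zero_mul, add_zero]
  push_cast
  ring

lemma pascal2 (N k : ℕ) :
    ((N+2).choose (k+2) : ℚ) = (N.choose (k+2) : ℚ) + 2*((N+1).choose (k+1) : ℚ) - (N.choose k : ℚ) := by
  have h1 : (N+1+1).choose (k+1+1) = (N+1).choose (k+1) + (N+1).choose (k+1+1) := Nat.choose_succ_succ _ _
  have h2 : (N+1).choose (k+1) = N.choose k + N.choose (k+1) := Nat.choose_succ_succ _ _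
  have h3 : (N+1).choose (k+1+1) = N.choose (k+1) + N.choose (k+1+1) := Nat.choose_succ_succ _ _
  have e2 : k+1+1 = k+2 := by omega
  rw [e2] at h1 h3
  push_cast [h1, h2, h3]
  ring

lemma cheb (m : ℕ) : ∑ r ∈ range (m+1), (-1:ℚ)^r * 2^(m-2*r) * ((m-r).choose r : ℚ) * 1 = (m+1 : ℚ) := by
  induction m using Nat.strong_induction_on with
  | _ m IH =>
    match m with
    | 0 => norm_num
    | 1 => norm_num [Finset.sum_range_succ]
    | (m+2) =>
      rw [key_rec (fun _ => (1:ℚ)) m, IH (m+1) (by omega), IH m (by omega)]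
      push_cast; ring

lemma keyI (G m : ℕ) :
    ∑ r ∈ range (m+1), (-1:ℚ)^r * 2^(m-2*r) * ((m-r).choose r : ℚ) * (((G+(m-r)).choose G : ℕ) : ℚ)
      = ((2*G+1+m).choose m : ℚ) := by
  induction G generalizing m with
  | zero =>
    simp only [Nat.zero_add, Nat.choose_zero_right, Nat.cast_one, zero_add]
    rw [show 2*0+1+m = m+1 from by omega, Nat.choose_succ_self_right]
    have := cheb m
    simpa using this
  | succ G IHG =>
    induction m using Nat.strong_induction_on with
    | _ m IH =>
      match m with
      | 0 => simp
      | 1 =>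
        rw [Finset.sum_range_succ, Finset.sum_range_succ, Finset.sum_range_zero]
        norm_num [Nat.choose_succ_self_right]
        ring
      | (m+2) =>
        have split : ∀ r ∈ range (m+3),
            (-1:ℚ)^r * 2^(m+2-2*r) * ((m+2-r).choose r : ℚ) * ((G+1+(m+2-r)).choose (G+1) : ℚ)
            = (-1:ℚ)^r * 2^(m+2-2*r) * ((m+2-r).choose r : ℚ) * ((G+(m+2-r)).choose G : ℚ)
              + (-1:ℚ)^r * 2^(m+2-2*r) * ((m+2-r).choose r : ℚ)
                  * ((fun x => ((G+1+x).choose (G+1) : ℚ)) (m+1-r)) := by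
          intro r hr
          rw [Finset.mem_range] at hr
          rcases le_or_gt r (m+1) with hc | hc
          · have e1 : G+1+(m+2-r) = (G+(m+2-r))+1 := by omega
            have e2 : m+2-r = (m+1-r)+1 := by omega
            rw [e1, Nat.choose_succ_succ]
            push_cast
            rw [show G+(m+2-r) = G+1+(m+1-r) from by omega]
            ring
          · have hr2 : r = m+2 := by omega
            subst hr2
            rw [show m+2-(m+2) = 0 from by omega]
            simp [Nat.choose_eq_zero_of_lt]
        rw [Finset.sum_congr rfl split, Finset.sum_add_distrib]
        rw [IHG (m+2)]
        rw [key_rec (fun x => ((G+1+x).choose (G+1) : ℚ)) m]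
        rw [IH (m+1) (by omega), IH m (by omega)]
        rw [show 2*G+1+(m+2) = (2*G+m+1)+2 from by omega,
            show 2*(G+1)+1+(m+1) = (2*G+m+2)+2 from by omega,
            show 2*(G+1)+1+m = (2*G+m+1)+2 from by omega,
            show 2*(G+1)+1+(m+2) = (2*G+m+3)+2 from by omega]
        rw [pascal2 (2*G+m+3) m, show (2*G+m+3)+1 = (2*G+m+2)+2 from by omega,
            show 2*G+m+3 = (2*G+m+1)+2 from by omega, pascal2 (2*G+m+1) m]
        ring

lemma keyII (N : ℕ) : ∀ d n : ℕ,
    ∑ j ∈ range (n+1), (-1:ℚ)^j * (N.choose j : ℚ) * ((N+d+n-j).choose (n-j) : ℚ)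
      = ((d+n).choose n : ℚ) := by
  induction N with
  | zero =>
    intro d n
    rw [Finset.sum_range_succ']
    have : ∀ i ∈ range n, (-1:ℚ)^(i+1) * ((0:ℕ).choose (i+1) : ℚ) * ((0+d+n-(i+1)).choose (n-(i+1)) : ℚ) = 0 := by
      intro i hi; simp [Nat.choose_eq_zero_of_lt]
    rw [Finset.sum_congr rfl this]
    simp
  | succ N IHN =>
    intro d n
    match n with
    | 0 => simp
    | (n+1) =>
      rw [Finset.sum_range_succ']
      have split : ∀ i ∈ range (n+1),
          (-1:ℚ)^(i+1) * ((N+1).choose (i+1) : ℚ) * ((N+1+d+(n+1)-(i+1)).choose ((n+1)-(i+1)) : ℚ)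
          = (-1:ℚ)^(i+1) * (N.choose (i+1) : ℚ) * ((N+(d+1)+(n+1)-(i+1)).choose ((n+1)-(i+1)) : ℚ)
            - (-1:ℚ)^i * (N.choose i : ℚ) * ((N+(d+1)+n-i).choose (n-i) : ℚ) := by
        intro i hi
        rw [Finset.mem_range] at hi
        rw [Nat.choose_succ_succ]
        rw [show N+1+d+(n+1)-(i+1) = N+(d+1)+n-i from by omega,
            show N+(d+1)+(n+1)-(i+1) = N+(d+1)+n-i from by omega,
            show (n+1)-(i+1) = n-i from by omega]
        push_cast
        ring
      rw [Finset.sum_congr rfl split, Finset.sum_sub_distrib]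
      rw [IHN (d+1) n]
      have h1 := IHN (d+1) (n+1)
      rw [Finset.sum_range_succ'] at h1
      rw [show N+(d+1)+(n+1)-0 = N+1+d+(n+1)-0 from by omega] at h1
      simp only [Nat.choose_zero_right, Nat.cast_one, pow_zero, one_mul, Nat.sub_zero] at h1 ⊢
      have pas : ((d+1+(n+1)).choose (n+1) : ℚ) = ((d+1+n).choose n : ℚ) + ((d+(n+1)).choose (n+1) : ℚ) := by
        rw [show d+1+(n+1) = (d+n+1)+1 from by omega, show (n+1) = n+1 from rfl,
            Nat.choose_succ_succ, show d+1+n = d+n+1 from by omega, show d+(n+1) = d+n+1 from by omega]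
        push_cast; ring
      rw [pas] at h1
      linarith [h1]

lemma neg_one_pow_sub (a b : ℕ) (h : b ≤ a) : ((-1:ℚ))^(a-b) = (-1)^a * (-1)^b := by
  have e : a - b + b = a := by omega
  have h1 : ((-1:ℚ))^(a-b)*(-1)^b = (-1)^a := by rw [← pow_add, e]
  have hb : ((-1:ℚ))^b*(-1)^b = 1 := by rw [← pow_add]; exact Even.neg_one_pow ⟨b, by ring⟩
  calc ((-1:ℚ))^(a-b) = (-1)^(a-b)*((-1)^b*(-1)^b) := by rw [hb, mul_one]
    _ = ((-1)^(a-b)*(-1)^b)*(-1)^b := by ring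
    _ = (-1)^a*(-1)^b := by rw [h1]

lemma term_conv (g n j r : ℕ) (hg : 2 ≤ g) (hj : j ≤ n) :
    (if j + 2 * r ≤ n ∧ j ≤ 2 * g + 2 then
        (-1 : ℚ) ^ (n - j - r) * 2 ^ (n - j - 2 * r) *
          ((2 * g - 1 + n - j - r).factorial : ℚ) /
            ((j.factorial : ℚ) * (r.factorial : ℚ) * (((2 * g + 2 - j).factorial : ℚ)) *
              ((n - j - 2 * r).factorial : ℚ))
      else 0)
    = ((2*g-1).factorial : ℚ)/((2*g+2).factorial : ℚ) * (-1)^n *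
        ((-1:ℚ)^j * ((2*g+2).choose j : ℚ)) *
        ((-1:ℚ)^r * 2^(n-j-2*r) * ((n-j-r).choose r : ℚ) * ((2*g-1+(n-j-r)).choose (2*g-1) : ℚ)) := by
  split_ifs with hcond
  · obtain ⟨h1, h2⟩ := hcond
    have hrm : r ≤ n - j := by omega
    have hr2 : r ≤ n - j - r := by omega
    rw [Nat.cast_choose ℚ h2, Nat.cast_choose ℚ hr2,
        Nat.cast_choose ℚ (show 2*g-1 ≤ 2*g-1+(n-j-r) from by omega)]
    rw [show n-j-r-r = n-j-2*r from by omega,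
        show 2*g-1+(n-j-r)-(2*g-1) = n-j-r from by omega,
        show 2*g-1+n-j-r = 2*g-1+(n-j-r) from by omega]
    rw [neg_one_pow_sub (n-j) r hrm, neg_one_pow_sub n j hj]
    have z1 : ((j.factorial : ℚ)) ≠ 0 := Nat.cast_ne_zero.mpr (Nat.factorial_ne_zero _)
    have z2 : ((r.factorial : ℚ)) ≠ 0 := Nat.cast_ne_zero.mpr (Nat.factorial_ne_zero _)
    have z3 : (((2*g+2-j).factorial : ℚ)) ≠ 0 := Nat.cast_ne_zero.mpr (Nat.factorial_ne_zero _)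
    have z4 : (((n-j-2*r).factorial : ℚ)) ≠ 0 := Nat.cast_ne_zero.mpr (Nat.factorial_ne_zero _)
    have z5 : (((2*g+2).factorial : ℚ)) ≠ 0 := Nat.cast_ne_zero.mpr (Nat.factorial_ne_zero _)
    have z6 : (((2*g-1).factorial : ℚ)) ≠ 0 := Nat.cast_ne_zero.mpr (Nat.factorial_ne_zero _)
    have z7 : (((n-j-r).factorial : ℚ)) ≠ 0 := Nat.cast_ne_zero.mpr (Nat.factorial_ne_zero _)
    field_simp
  · push_neg at hcond
    rcases le_or_gt j (2*g+2) with hle | hlt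
    · have hn : ¬ (j + 2*r ≤ n) := fun h => by have := hcond h; omega
      have : (n-j-r).choose r = 0 := Nat.choose_eq_zero_of_lt (by omega)
      rw [this]
      simp
    · have : (2*g+2).choose j = 0 := Nat.choose_eq_zero_of_lt hlt
      rw [this]
      simp

theorem bini_key_lemma (g n : ℕ) (hg : 2 ≤ g) :
    ∑ j ∈ Finset.range (n + 1), ∑ r ∈ Finset.range (n + 1),
      (if j + 2 * r ≤ n ∧ j ≤ 2 * g + 2 then
        (-1 : ℚ) ^ (n - j - r) * 2 ^ (n - j - 2 * r) *
          ((2 * g - 1 + n - j - r).factorial : ℚ) /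
            ((j.factorial : ℚ) * (r.factorial : ℚ) * (((2 * g + 2 - j).factorial : ℚ)) *
              ((n - j - 2 * r).factorial : ℚ))
      else 0)
    = (-1 : ℚ) ^ n * ((2 * g + n - 3).factorial : ℚ) /
        ((2 * g : ℚ) * (2 * g + 1) * (2 * g + 2) * (n.factorial : ℚ) *
          ((2 * g - 3).factorial : ℚ)) := by
  have hstep : ∀ j ∈ range (n+1),
      (∑ r ∈ Finset.range (n + 1),
        (if j + 2 * r ≤ n ∧ j ≤ 2 * g + 2 then
          (-1 : ℚ) ^ (n - j - r) * 2 ^ (n - j - 2 * r) *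
            ((2 * g - 1 + n - j - r).factorial : ℚ) /
              ((j.factorial : ℚ) * (r.factorial : ℚ) * (((2 * g + 2 - j).factorial : ℚ)) *
                ((n - j - 2 * r).factorial : ℚ))
        else 0))
      = ((2*g-1).factorial : ℚ)/((2*g+2).factorial : ℚ) * (-1)^n *
          ((-1:ℚ)^j * (((2*g+2).choose j : ℕ) : ℚ) * (((2*g+2)+(2*g-3)+n-j).choose (n-j) : ℚ)) := by
    intro j hj
    rw [Finset.mem_range] at hj
    have hj' : j ≤ n := by omega
    rw [Finset.sum_congr rfl (fun r _ => term_conv g n j r hg hj')]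
    rw [← Finset.mul_sum]
    have hsub : ∑ r ∈ range (n+1),
        ((-1:ℚ)^r * 2^(n-j-2*r) * ((n-j-r).choose r : ℚ) * ((2*g-1+(n-j-r)).choose (2*g-1) : ℚ))
        = ∑ r ∈ range ((n-j)+1),
        ((-1:ℚ)^r * 2^(n-j-2*r) * ((n-j-r).choose r : ℚ) * ((2*g-1+(n-j-r)).choose (2*g-1) : ℚ)) := by
      symm
      apply Finset.sum_subset
      · apply Finset.range_subset_range.mpr; omega
      · intro r hr hr2
        rw [Finset.mem_range] at hr hr2
        have : (n-j-r).choose r = 0 := Nat.choose_eq_zero_of_lt (by omega)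
        rw [this]; simp
    rw [hsub, keyI (2*g-1) (n-j)]
    rw [show 2*(2*g-1)+1+(n-j) = (2*g+2)+(2*g-3)+n-j from by omega]
    ring
  rw [Finset.sum_congr rfl hstep]
  rw [← Finset.mul_sum]
  rw [keyII (2*g+2) (2*g-3) n]
  have hc := Nat.cast_choose ℚ (show n ≤ (2*g-3)+n from by omega)
  rw [hc, show 2*g-3+n-n = 2*g-3 from by omega]
  have f1 : (((2*g+2).factorial : ℕ) : ℚ) = (2*g+2)*(2*g+1)*(2*g)*(((2*g-1).factorial : ℕ) : ℚ) := by
    rw [show 2*g+2 = (2*g+1)+1 from by omega, Nat.factorial_succ, Nat.factorial_succ,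
        show 2*g = (2*g-1)+1 from by omega, Nat.factorial_succ]
    push_cast
    have : ((2*g-1 : ℕ) : ℚ) = 2*(g:ℚ)-1 := by
      have : (2*g-1) + 1 = 2*g := by omega
      have := congrArg (fun x : ℕ => (x : ℚ)) this
      push_cast at this
      linarith
    rw [this]; ring
  rw [f1, show 2*g+n-3 = 2*g-3+n from by omega]
  have z1 : ((n.factorial : ℚ)) ≠ 0 := Nat.cast_ne_zero.mpr (Nat.factorial_ne_zero _)
  have z2 : (((2*g-3).factorial : ℚ)) ≠ 0 := Nat.cast_ne_zero.mpr (Nat.factorial_ne_zero _)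
  have z6 : (((2*g-1).factorial : ℚ)) ≠ 0 := Nat.cast_ne_zero.mpr (Nat.factorial_ne_zero _)
  have zg : ((g:ℚ)) ≠ 0 := Nat.cast_ne_zero.mpr (by omega)
  field_simp
end
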